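/- Let p be a prime, M a finite group with Sylow p-subgroup S such that S is nonabelian of order p^3, Z(S) is normal in M, and C_M(V) ≤ V for every subgroup V of S of order at least p^2. Then O_{p'}(M) = 1. -/

import Mathlib

open Subgroup Finset Pointwise

section AuxCW

variable {M : Type*} [Group M] {p : ℕ} [Fact p.Prime]
variable {Sg Z W : Subgroup M}
open scoped IsMulCommutative

/-- Conjugation of an element of `W` by an element of `Sg`, for `W` invariant under `Sg`. -/
def cW (hWinv : ∀ s ∈ Sg, ∀ w ∈ W, s * w * s⁻¹ ∈ W) (s : Sg) (w : W) : W :=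
  ⟨(s : M) * w * (s : M)⁻¹, hWinv s s.2 w w.2⟩

variable (hWinv : ∀ s ∈ Sg, ∀ w ∈ W, s * w * s⁻¹ ∈ W)

@[simp] lemma cW_coe (s : Sg) (w : W) : ((cW hWinv s w : W) : M) = s * w * (s : M)⁻¹ := rfl

lemma cW_mul (s : Sg) (u v : W) :
    cW hWinv s (u * v) = cW hWinv s u * cW hWinv s v := by
  apply Subtype.ext
  show (s : M) * ((u : M) * (v : M)) * (s : M)⁻¹ =
    ((s : M) * u * (s : M)⁻¹) * ((s : M) * v * (s : M)⁻¹)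
  group

lemma cW_inv (s : Sg) (u : W) : cW hWinv s u⁻¹ = (cW hWinv s u)⁻¹ := by
  apply Subtype.ext
  show (s : M) * (u : M)⁻¹ * (s : M)⁻¹ = ((s : M) * u * (s : M)⁻¹)⁻¹
  group

lemma cW_comp (s t : Sg) (w : W) :
    cW hWinv (s * t) w = cW hWinv s (cW hWinv t w) := by
  apply Subtype.ext
  show ((s : M) * (t : M)) * (w : M) * ((s : M) * (t : M))⁻¹ =
    (s : M) * ((t : M) * w * (t : M)⁻¹) * (s : M)⁻¹
  group

lemma cW_one (w : W) : cW hWinv 1 w = w := by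
  apply Subtype.ext
  show (1 : M) * (w : M) * (1 : M)⁻¹ = (w : M)
  group

lemma cW_congr (hzw : ∀ z ∈ Z, ∀ n ∈ W, z * n = n * z)
    (s t : Sg) (h : (s : M) * ((t : M))⁻¹ ∈ Z) (w : W) :
    cW hWinv s w = cW hWinv t w := by
  apply Subtype.ext
  have hA : ((t : M) * w * (t : M)⁻¹) ∈ W := hWinv t t.2 w w.2
  have hc := hzw _ h _ hA
  show (s : M) * w * (s : M)⁻¹ = (t : M) * w * (t : M)⁻¹
  calc (s : M) * w * (s : M)⁻¹
      = ((s : M) * (t : M)⁻¹) * ((t : M) * w * (t : M)⁻¹) * ((s : M) * (t : M)⁻¹)⁻¹ := by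
        group
    _ = (t : M) * w * (t : M)⁻¹ := by rw [hc]; group

/-- The key averaging computation: if every element of `Sg` outside `Z` acts without
nontrivial fixed points on the commutative invariant subgroup `W`, and suitable
commutator conditions hold, then every element of `W` has order dividing `p`. -/
lemma key_pow_eq_one [Finite M] [IsMulCommutative W]
    (hzw : ∀ z ∈ Z, ∀ n ∈ W, z * n = n * z)
    (hZconj : ∀ (g : M), ∀ z ∈ Z, g * z * g⁻¹ ∈ Z)
    (hxpZ : ∀ s : Sg, (s : M) ^ p ∈ Z)
    (hK : ∀ x y : Sg, ∀ n : ℕ, ((x * y : Sg) : M) ^ n * ((x : M) ^ n * (y : M) ^ n)⁻¹ ∈ Z)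
    (hfpf : ∀ s : Sg, (s : M) ∉ Z → ∀ w : W, cW hWinv s w = w → w = 1)
    (a b : Sg) (hbZ : (b : M) ∉ Z) (hab : ∀ j : ℕ, (a : M) * (b : M) ^ j ∉ Z)
    (w : W) : w ^ p = 1 := by
  have hp : p.Prime := Fact.out
  haveI : NeZero p := ⟨hp.ne_zero⟩
  haveI : Fact (1 < p) := ⟨hp.one_lt⟩
  -- powers of a fixed element, modulo `Z`
  have hpowZ : ∀ (s : Sg) (X Y : ℕ), X % p = Y % p →
      (s : M) ^ X * ((s : M) ^ Y)⁻¹ ∈ Z := by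
    intro s X Y h
    have e : ∀ T : ℕ, (s : M) ^ T = ((s : M) ^ p) ^ (T / p) * (s : M) ^ (T % p) := by
      intro T
      rw [← pow_mul, ← pow_add, Nat.div_add_mod]
    have hz : ((s : M) ^ p) ^ (X / p) * (((s : M) ^ p) ^ (Y / p))⁻¹ ∈ Z :=
      mul_mem (pow_mem (hxpZ s) _) (inv_mem (pow_mem (hxpZ s) _))
    have he : (s : M) ^ X * ((s : M) ^ Y)⁻¹
        = ((s : M) ^ p) ^ (X / p) * (((s : M) ^ p) ^ (Y / p))⁻¹ := by
      conv_lhs => rw [e X, e Y, h]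
      group
    rw [he]; exact hz
  have congrS : ∀ (s : Sg) (X Y : ℕ), X % p = Y % p →
      ∀ u : W, cW hWinv (s ^ X) u = cW hWinv (s ^ Y) u := by
    intro s X Y h u
    refine cW_congr hWinv hzw _ _ ?_ u
    have := hpowZ s X Y h
    simpa using this
  have congrAB : ∀ (I X Y : ℕ), X % p = Y % p →
      ∀ u : W, cW hWinv (a ^ I * b ^ X) u = cW hWinv (a ^ I * b ^ Y) u := by
    intro I X Y h u
    refine cW_congr hWinv hzw _ _ ?_ u
    have h1 : (b : M) ^ X * ((b : M) ^ Y)⁻¹ ∈ Z := hpowZ b X Y h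
    have h2 : (a : M) ^ I * ((b : M) ^ X * ((b : M) ^ Y)⁻¹) * ((a : M) ^ I)⁻¹ ∈ Z :=
      hZconj _ _ h1
    have he : ((a ^ I * b ^ X : Sg) : M) * (((a ^ I * b ^ Y : Sg) : M))⁻¹
        = (a : M) ^ I * ((b : M) ^ X * ((b : M) ^ Y)⁻¹) * ((a : M) ^ I)⁻¹ := by
      push_cast
      group
    rw [he]; exact h2
  set T : Sg → W → W := fun s u => ∏ j : ZMod p, cW hWinv (s ^ (j.val)) u with hT
  have T_mul : ∀ s u v, T s (u * v) = T s u * T s v := by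
    intro s u v; simp [hT, cW_mul, Finset.prod_mul_distrib]
  have T_inv : ∀ s u, T s u⁻¹ = (T s u)⁻¹ := by
    intro s u; simp [hT, cW_inv, Finset.prod_inv_distrib]
  -- step 1 : the `T`-average of any element under `s ∉ Z` is trivial
  have step1 : ∀ s : Sg, (s : M) ∉ Z → ∀ u : W, T s u = 1 := by
    intro s hs u
    have hinj : Function.Injective (fun u : W => u⁻¹ * cW hWinv s u) := by
      intro u v huv
      simp only at huv
      have hA : cW hWinv s u = u * (v⁻¹ * cW hWinv s v) := by rw [← huv]; group
      have h2 : cW hWinv s (u * v⁻¹) = u * v⁻¹ := by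
        rw [cW_mul, cW_inv, hA]; group
      have h3 : u * v⁻¹ = 1 := hfpf s hs _ h2
      exact mul_inv_eq_one.mp h3
    obtain ⟨x, hx⟩ := (Finite.injective_iff_surjective.mp hinj) u
    simp only at hx
    have hshift : T s (cW hWinv s x) = T s x := by
      have e1 : ∀ j : ZMod p, cW hWinv (s ^ j.val) (cW hWinv s x)
          = cW hWinv (s ^ ((1 + j : ZMod p)).val) x := by
        intro j
        rw [← cW_comp, ← pow_succ]
        refine congrS s (j.val + 1) ((1 + j : ZMod p)).val ?_ x
        rw [ZMod.val_add, ZMod.val_one, Nat.mod_mod_of_dvd _ dvd_rfl, Nat.add_comm]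
      calc T s (cW hWinv s x)
          = ∏ j : ZMod p, cW hWinv (s ^ ((1 + j : ZMod p)).val) x := by
            rw [hT]; exact Finset.prod_congr rfl fun j _ => e1 j
        _ = ∏ j : ZMod p, cW hWinv (s ^ (j.val)) x := by
            exact Fintype.prod_equiv (Equiv.addLeft (1 : ZMod p))
              (fun j => cW hWinv (s ^ ((1 + j : ZMod p)).val) x)
              (fun j => cW hWinv (s ^ (j.val)) x) (fun j => rfl)
        _ = T s x := rfl
    calc T s u = T s (x⁻¹ * cW hWinv s x) := by rw [hx]
      _ = (T s x)⁻¹ * T s (cW hWinv s x) := by rw [T_mul, T_inv]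
      _ = 1 := by rw [hshift]; group
  -- the two evaluations
  have haZ : (a : M) ∉ Z := by simpa using hab 0
  have habj : ∀ j : ℕ, ((a * b ^ j : Sg) : M) ∉ Z := by
    intro j; simpa using hab j
  set F : ZMod p → W := fun i => ∏ j : ZMod p, cW hWinv (a ^ (i.val) * b ^ (j.val)) w with hF
  have hR : ∏ i : ZMod p, F i = 1 := by
    rw [hF]
    rw [Finset.prod_comm]
    refine Finset.prod_eq_one fun j _ => ?_
    calc ∏ i : ZMod p, cW hWinv (a ^ (i.val) * b ^ (j.val)) w
        = ∏ i : ZMod p, cW hWinv (a ^ (i.val)) (cW hWinv (b ^ (j.val)) w) :=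
          Finset.prod_congr rfl fun i _ => cW_comp hWinv _ _ _
      _ = T a (cW hWinv (b ^ (j.val)) w) := rfl
      _ = 1 := step1 a haZ _
  have hF0 : F (0 : ZMod p) = 1 := by
    rw [hF]
    calc ∏ j : ZMod p, cW hWinv (a ^ ((0 : ZMod p).val) * b ^ (j.val)) w
        = ∏ j : ZMod p, cW hWinv (b ^ (j.val)) w := by
          refine Finset.prod_congr rfl fun j _ => ?_
          rw [ZMod.val_zero, pow_zero, one_mul]
      _ = T b w := rfl
      _ = 1 := step1 b hbZ w
  -- main identity
  have hptw : ∀ i j : ZMod p, cW hWinv ((a * b ^ (j.val)) ^ (i.val)) w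
      = cW hWinv (a ^ (i.val) * b ^ ((i * j : ZMod p).val)) w := by
    intro i j
    have e1 : cW hWinv ((a * b ^ (j.val)) ^ (i.val)) w
        = cW hWinv (a ^ (i.val) * (b ^ (j.val)) ^ (i.val)) w := by
      refine cW_congr hWinv hzw _ _ ?_ w
      have := hK a (b ^ (j.val)) (i.val)
      simpa using this
    have e2 : (b ^ (j.val) : Sg) ^ (i.val) = b ^ (j.val * i.val) := (pow_mul b _ _).symm
    rw [e1, e2]
    refine congrAB (i.val) (j.val * i.val) ((i * j : ZMod p).val) ?_ w
    rw [ZMod.val_mul, Nat.mod_mod_of_dvd _ dvd_rfl, Nat.mul_comm]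
  have hlhs1 : ∏ j : ZMod p, T (a * b ^ (j.val)) w = 1 :=
    Finset.prod_eq_one fun j _ => step1 _ (habj j.val) w
  have hlhs2 : ∏ j : ZMod p, T (a * b ^ (j.val)) w
      = ∏ i : ZMod p, ∏ j : ZMod p, cW hWinv (a ^ (i.val) * b ^ ((i * j : ZMod p).val)) w := by
    rw [hT]
    rw [Finset.prod_comm]
    exact Finset.prod_congr rfl fun i _ => Finset.prod_congr rfl fun j _ => hptw i j
  have hzeroterm : ∏ j : ZMod p, cW hWinv
      (a ^ ((0 : ZMod p).val) * b ^ (((0 : ZMod p) * j : ZMod p).val)) w = w ^ p := by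
    have : ∀ j : ZMod p, cW hWinv
        (a ^ ((0 : ZMod p).val) * b ^ (((0 : ZMod p) * j : ZMod p).val)) w = w := by
      intro j
      rw [zero_mul, ZMod.val_zero, pow_zero, pow_zero, one_mul]
      exact cW_one hWinv w
    rw [Finset.prod_congr rfl fun j _ => this j]
    rw [Finset.prod_const, Finset.card_univ, ZMod.card]
  have hresterm : ∀ i : ZMod p, i ≠ 0 →
      ∏ j : ZMod p, cW hWinv (a ^ (i.val) * b ^ ((i * j : ZMod p).val)) w = F i := by
    intro i hi
    rw [hF]
    exact Fintype.prod_equiv (Equiv.mulLeft₀ i hi)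
      (fun j => cW hWinv (a ^ (i.val) * b ^ ((i * j : ZMod p).val)) w)
      (fun j => cW hWinv (a ^ (i.val) * b ^ (j.val)) w) (fun j => by rfl)
  -- combine
  have hsplit : ∏ i : ZMod p, ∏ j : ZMod p,
      cW hWinv (a ^ (i.val) * b ^ ((i * j : ZMod p).val)) w
      = w ^ p * ∏ i ∈ Finset.univ.erase (0 : ZMod p), F i := by
    rw [← Finset.mul_prod_erase Finset.univ _ (Finset.mem_univ (0 : ZMod p))]
    rw [hzeroterm]
    congr 1
    exact Finset.prod_congr rfl fun i hi => hresterm i (Finset.ne_of_mem_erase hi)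
  have hRsplit : (1 : W) = ∏ i ∈ Finset.univ.erase (0 : ZMod p), F i := by
    rw [← hR, ← Finset.mul_prod_erase Finset.univ _ (Finset.mem_univ (0 : ZMod p)), hF0,
      one_mul]
  have hone : (1 : W) = w ^ p := by
    calc (1 : W) = ∏ j : ZMod p, T (a * b ^ (j.val)) w := hlhs1.symm
      _ = w ^ p * ∏ i ∈ Finset.univ.erase (0 : ZMod p), F i := by rw [hlhs2, hsplit]
      _ = w ^ p * 1 := by rw [← hRsplit]
      _ = w ^ p := mul_one _
  exact hone.symm

end AuxCW

/-- Let `M` be a finite group with a nonabelian Sylow `p`-subgroup `S` of order `p^3`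
such that `Z(S)` is normal in `M` and `C_M(V) ≤ V` for every subgroup `V ≤ S` of order
at least `p^2`. Then `O_{p'}(M) = 1`, i.e. every normal subgroup of order prime to `p`
is trivial. -/
theorem pPrimeCore_eq_bot
    {M : Type*} [Group M] [Finite M] {p : ℕ} [Fact p.Prime]
    (S : Sylow p M) (hcard : Nat.card ↥(S : Subgroup M) = p ^ 3)
    (hna : ¬ ∀ a b : ↥(S : Subgroup M), a * b = b * a)
    (hZ : ((S : Subgroup M) ⊓ Subgroup.centralizer ((S : Subgroup M) : Set M)).Normal)
    (hV : ∀ V : Subgroup M, V ≤ S → p ^ 2 ≤ Nat.card ↥V →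
      Subgroup.centralizer (V : Set M) ≤ V) :
    ∀ N : Subgroup M, N.Normal → (Nat.card ↥N).Coprime p → N = ⊥ := by
  intro N hN hcop
  by_contra hNbot
  haveI := hN
  have hp : p.Prime := Fact.out
  set Sg : Subgroup M := (S : Subgroup M) with hSg
  set Z : Subgroup M := Sg ⊓ Subgroup.centralizer (Sg : Set M) with hZdef
  have hZS : Z ≤ Sg := inf_le_left
  -- center correspondence
  have centerA : ∀ (x : ↥Sg), ((x : M) ∈ Z ↔ x ∈ Subgroup.center ↥Sg) := by
    intro x
    rw [Subgroup.mem_center_iff, hZdef, Subgroup.mem_inf]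
    constructor
    · intro hx g
      apply Subtype.ext
      have h2 := hx.2
      exact Subgroup.mem_centralizer_iff.mp h2 _ g.2
    · intro hx
      refine ⟨x.2, Subgroup.mem_centralizer_iff.mpr ?_⟩
      intro h hh
      exact congrArg Subtype.val (hx ⟨h, hh⟩)
  haveI : Nontrivial ↥Sg := by
    rw [← Finite.one_lt_card_iff_nontrivial, hcard]
    exact Nat.one_lt_pow (by norm_num) hp.one_lt
  have hpgS : IsPGroup p ↥Sg := S.isPGroup'
  have hcenter_nontriv : Nontrivial (Subgroup.center ↥Sg) := hpgS.center_nontrivial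
  have hcentdvd : Nat.card (Subgroup.center ↥Sg) ∣ p ^ 3 := by
    rw [← hcard]; exact Subgroup.card_subgroup_dvd_card _
  obtain ⟨k, hk3, hkcard⟩ := (Nat.dvd_prime_pow hp).mp hcentdvd
  have cardq : Nat.card ↥Sg
      = Nat.card (↥Sg ⧸ Subgroup.center ↥Sg) * Nat.card (Subgroup.center ↥Sg) :=
    Subgroup.card_eq_card_quotient_mul_card_subgroup _
  have hcyc_imp : IsCyclic (↥Sg ⧸ Subgroup.center ↥Sg) → False := by
    intro hcyc
    exact hna (commutative_of_cyclic_center_quotient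
      (QuotientGroup.mk' (Subgroup.center ↥Sg)) (QuotientGroup.ker_mk' _).le)
  have hk0 : k ≠ 0 := by
    intro h; rw [h, pow_zero] at hkcard
    exact ((Finite.one_lt_card_iff_nontrivial).mpr hcenter_nontriv).ne' hkcard
  have hk3' : k ≠ 3 := by
    intro h; rw [h] at hkcard
    have htop : Subgroup.center ↥Sg = ⊤ :=
      Subgroup.eq_top_of_card_eq _ (by rw [hkcard, hcard])
    apply hna; intro x y
    exact Subgroup.mem_center_iff.mp (htop ▸ Subgroup.mem_top y) x
  have hk2 : k ≠ 2 := by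
    intro h; rw [h] at hkcard
    have hq : Nat.card (↥Sg ⧸ Subgroup.center ↥Sg) = p := by
      have h3 := cardq; rw [hcard, hkcard] at h3
      have hp2 : 0 < p ^ 2 := pow_pos hp.pos 2
      refine Nat.eq_of_mul_eq_mul_right hp2 ?_
      rw [← h3]; ring
    exact hcyc_imp (isCyclic_of_prime_card (p := p) hq)
  have hk1 : k = 1 := by omega
  have cardZcenter : Nat.card (Subgroup.center ↥Sg) = p := by rw [hkcard, hk1, pow_one]
  have cardQuot : Nat.card (↥Sg ⧸ Subgroup.center ↥Sg) = p ^ 2 := by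
    have h3 := cardq; rw [hcard, cardZcenter] at h3
    refine Nat.eq_of_mul_eq_mul_right hp.pos ?_
    rw [← h3]; ring
  have hmapZ : Subgroup.map Sg.subtype (Subgroup.center ↥Sg) = Z := by
    ext x; constructor
    · rintro ⟨y, hy, rfl⟩; exact (centerA y).mpr hy
    · intro hx
      exact ⟨⟨x, hZS hx⟩, (centerA _).mp hx, rfl⟩
  have cardZ : Nat.card ↥Z = p := by
    rw [← hmapZ, ← cardZcenter]
    exact (Nat.card_congr
      (Subgroup.equivMapOfInjective _ _ Sg.subtype_injective).toEquiv).symm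
  have hcommQ : ∀ u v : ↥Sg ⧸ Subgroup.center ↥Sg, u * v = v * u :=
    IsPGroup.commutative_of_card_eq_prime_sq cardQuot
  -- p-th powers are central
  have hxpZ : ∀ x : ↥Sg, ((x : M)) ^ p ∈ Z := by
    intro x
    by_contra hc
    have hx : ¬ ((x ^ p : ↥Sg) ∈ Subgroup.center ↥Sg) := by
      intro h
      exact hc (by simpa using (centerA (x ^ p)).mpr h)
    have hne : (QuotientGroup.mk' (Subgroup.center ↥Sg) x) ^ p ≠ 1 := by
      intro h
      apply hx
      have hker : x ^ p ∈ (QuotientGroup.mk' (Subgroup.center ↥Sg)).ker := by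
        rw [MonoidHom.mem_ker, map_pow, h]
      rwa [QuotientGroup.ker_mk'] at hker
    have hdvd : orderOf (QuotientGroup.mk' (Subgroup.center ↥Sg) x) ∣ p ^ 2 := by
      rw [← cardQuot]; exact orderOf_dvd_natCard _
    obtain ⟨j, hj2, hjord⟩ := (Nat.dvd_prime_pow hp).mp hdvd
    have hj : j = 2 := by
      rcases Nat.lt_or_ge j 2 with h | h
      · exfalso; apply hne
        refine orderOf_dvd_iff_pow_eq_one.mp ?_
        rw [hjord]
        calc p ^ j ∣ p ^ 1 := pow_dvd_pow p (by omega)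
          _ = p := pow_one p
      · omega
    refine hcyc_imp ?_
    exact isCyclic_of_orderOf_eq_card _ (by rw [hjord, hj, cardQuot])
  -- commutators are central
  have hK : ∀ x y : ↥Sg, ∀ n : ℕ,
      ((x * y : ↥Sg) : M) ^ n * (((x : M)) ^ n * ((y : M)) ^ n)⁻¹ ∈ Z := by
    intro x y n
    have hcent : (x * y) ^ n * (x ^ n * y ^ n)⁻¹ ∈ Subgroup.center ↥Sg := by
      have h1 : QuotientGroup.mk' (Subgroup.center ↥Sg)
          ((x * y) ^ n * (x ^ n * y ^ n)⁻¹) = 1 := by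
        have hc : Commute (QuotientGroup.mk' (Subgroup.center ↥Sg) x)
            (QuotientGroup.mk' (Subgroup.center ↥Sg) y) := hcommQ _ _
        simp only [map_mul, map_inv, map_pow]
        rw [hc.mul_pow]
        group
      have hker : (x * y) ^ n * (x ^ n * y ^ n)⁻¹
          ∈ (QuotientGroup.mk' (Subgroup.center ↥Sg)).ker := by
        rw [MonoidHom.mem_ker]; exact h1
      rwa [QuotientGroup.ker_mk'] at hker
    have := (centerA _).mpr hcent
    simpa using this
  -- existence of b outside Z
  have hbex : ∃ b : ↥Sg, (b : M) ∉ Z := by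
    by_contra h; push_neg at h
    apply hna; intro x y
    apply Subtype.ext
    have hy := (Subgroup.mem_inf.mp (hZdef ▸ h y)).2
    exact Subgroup.mem_centralizer_iff.mp hy _ x.2
  obtain ⟨b, hbZ⟩ := hbex
  -- existence of an independent a
  have haex : ∃ a : ↥Sg, ∀ j : ℕ, (a : M) * (b : M) ^ j ∉ Z := by
    have hbp : (QuotientGroup.mk' (Subgroup.center ↥Sg) b) ^ p = 1 := by
      have hmem : b ^ p ∈ Subgroup.center ↥Sg :=
        (centerA (b ^ p)).mp (by simpa using hxpZ b)
      have hker : b ^ p ∈ (QuotientGroup.mk' (Subgroup.center ↥Sg)).ker := by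
        rw [QuotientGroup.ker_mk']; exact hmem
      rw [MonoidHom.mem_ker, map_pow] at hker
      exact hker
    set β := QuotientGroup.mk' (Subgroup.center ↥Sg) b with hβ
    have hzpow : Subgroup.zpowers β ≠ ⊤ := by
      intro htop
      have hall : ∀ x, x ∈ Subgroup.zpowers β := by
        intro x; rw [htop]; trivial
      have hord := orderOf_eq_card_of_forall_mem_zpowers hall
      rw [cardQuot] at hord
      have hdvd : orderOf β ∣ p := orderOf_dvd_iff_pow_eq_one.mpr hbp
      rw [hord] at hdvd
      have hle := Nat.le_of_dvd hp.pos hdvd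
      nlinarith [hp.one_lt]
    have hlt : Subgroup.zpowers β < ⊤ := lt_top_iff_ne_top.mpr hzpow
    obtain ⟨α, -, hα⟩ := SetLike.exists_of_lt hlt
    obtain ⟨aa, haa⟩ := QuotientGroup.mk'_surjective (Subgroup.center ↥Sg) α
    refine ⟨aa, fun j hj => ?_⟩
    have hmem : (aa * b ^ j : ↥Sg) ∈ Subgroup.center ↥Sg :=
      (centerA _).mp (by simpa using hj)
    have h1 : QuotientGroup.mk' (Subgroup.center ↥Sg) (aa * b ^ j) = 1 := by
      have hker : (aa * b ^ j : ↥Sg) ∈ (QuotientGroup.mk' (Subgroup.center ↥Sg)).ker := by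
        rw [QuotientGroup.ker_mk']; exact hmem
      rwa [MonoidHom.mem_ker] at hker
    rw [map_mul, map_pow, haa] at h1
    apply hα
    have h2 : α = (β ^ j)⁻¹ := by
      rw [← hβ] at h1
      rw [eq_inv_iff_mul_eq_one]
      exact h1
    rw [h2]
    exact inv_mem (pow_mem (Subgroup.mem_zpowers β) j)
  obtain ⟨a, hab⟩ := haex
  -- facts about N
  have triv : ∀ x : M, x ∈ N → x ∈ Sg → x = 1 := by
    intro x hxN hxS
    have h1 : orderOf x ∣ Nat.card ↥N := Subgroup.orderOf_dvd_natCard N hxN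
    have h2 : orderOf x ∣ p ^ 3 := by
      rw [← hcard]; exact Subgroup.orderOf_dvd_natCard Sg hxS
    have hco : Nat.Coprime (Nat.card ↥N) (p ^ 3) := hcop.pow_right 3
    have : orderOf x ∣ 1 := by
      rw [← hco]
      exact Nat.dvd_gcd h1 h2
    exact orderOf_eq_one_iff.mp (Nat.dvd_one.mp this)
  have zcomm : ∀ z ∈ Z, ∀ n ∈ N, z * n = n * z := by
    intro z hz n hn
    have hc1 : z * n * z⁻¹ * n⁻¹ ∈ N := by
      have := hN.conj_mem n hn z
      exact mul_mem this (inv_mem hn)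
    have hc2 : z * n * z⁻¹ * n⁻¹ ∈ Z := by
      have h2 : n * z⁻¹ * n⁻¹ ∈ Z := hZ.conj_mem z⁻¹ (inv_mem hz) n
      have : z * (n * z⁻¹ * n⁻¹) ∈ Z := mul_mem hz h2
      have he : z * (n * z⁻¹ * n⁻¹) = z * n * z⁻¹ * n⁻¹ := by group
      rwa [he] at this
    have h1 : z * n * z⁻¹ * n⁻¹ = 1 := triv _ hc1 (hZS hc2)
    have h2 : z * n = (z * n * z⁻¹ * n⁻¹) * (n * z) := by group
    rw [h1, one_mul] at h2
    exact h2
  -- a prime divisor of |N| and an S-invariant Sylow subgroup of N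
  have hNcard1 : Nat.card ↥N ≠ 1 := fun h => hNbot (Subgroup.card_eq_one.mp h)
  set q : ℕ := (Nat.card ↥N).minFac with hq
  have hqprime : q.Prime := Nat.minFac_prime hNcard1
  haveI : Fact q.Prime := ⟨hqprime⟩
  have hqdvd : q ∣ Nat.card ↥N := Nat.minFac_dvd _
  obtain ⟨P₀⟩ : Nonempty (Sylow q ↥N) := inferInstance
  set D : Subgroup M := Subgroup.map N.subtype (P₀ : Subgroup ↥N) with hD
  have hFr : Subgroup.normalizer (D : Set M) ⊔ N = ⊤ := Sylow.normalizer_sup_eq_top P₀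
  set Hn : Subgroup M := Subgroup.normalizer (D : Set M) with hHn
  have hsurj : Function.Surjective ((QuotientGroup.mk' N).comp Hn.subtype) := by
    intro x
    obtain ⟨g, rfl⟩ := QuotientGroup.mk'_surjective N x
    have hg : g ∈ ((Hn ⊔ N : Subgroup M) : Set M) := by rw [hFr]; trivial
    rw [Subgroup.mul_normal] at hg
    obtain ⟨h, hh, n, hn, rfl⟩ := hg
    refine ⟨⟨h, hh⟩, ?_⟩
    show QuotientGroup.mk h = QuotientGroup.mk (h * n)
    exact (QuotientGroup.mk_mul_of_mem h hn).symm
  have hcdvd1 : Nat.card (M ⧸ N) ∣ Nat.card ↥Hn :=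
    Subgroup.card_dvd_of_surjective _ hsurj
  have hp3M : p ^ 3 ∣ Nat.card M := by
    rw [← hcard]; exact Subgroup.card_subgroup_dvd_card _
  have hcards : Nat.card M = Nat.card (M ⧸ N) * Nat.card ↥N :=
    Subgroup.card_eq_card_quotient_mul_card_subgroup N
  have hp3q : p ^ 3 ∣ Nat.card (M ⧸ N) := by
    have hco : Nat.Coprime (p ^ 3) (Nat.card ↥N) := (hcop.symm.pow_left 3)
    refine hco.dvd_of_dvd_mul_right ?_
    rw [← hcards]; exact hp3M
  have hp3H : p ^ 3 ∣ Nat.card ↥Hn := dvd_trans hp3q hcdvd1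
  obtain ⟨K', hK'⟩ := Sylow.exists_subgroup_card_pow_prime p hp3H
  set K : Subgroup M := Subgroup.map Hn.subtype K' with hKdef
  have hKle : K ≤ Hn := Subgroup.map_subtype_le _
  have hKcard : Nat.card ↥K = p ^ 3 := by
    rw [hKdef, ← hK']
    exact (Nat.card_congr
      (Subgroup.equivMapOfInjective _ _ Hn.subtype_injective).toEquiv).symm
  have hfact : Nat.card ↥K = p ^ (Nat.card M).factorization p := by
    have hS := Sylow.card_eq_multiplicity S
    rw [hcard] at hS
    rw [hKcard, hS]
  set PK : Sylow p M := Sylow.ofCard K hfact with hPK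
  obtain ⟨g, hg⟩ := MulAction.exists_smul_eq M PK S
  have hSK : Sg = MulAut.conj g • K := by
    have h0 : (PK : Subgroup M) = K := rfl
    have h1 : ((g • PK : Sylow p M) : Subgroup M) = MulAut.conj g • K := by
      rw [Sylow.coe_subgroup_smul, h0]
    rw [← h1, hg]
  have hmemS : ∀ x : M, x ∈ Sg ↔ ∃ k ∈ K, g * k * g⁻¹ = x := by
    intro x
    rw [hSK, Subgroup.mem_smul_pointwise_iff_exists]
    constructor
    · rintro ⟨s, hs, rfl⟩; exact ⟨s, hs, rfl⟩
    · rintro ⟨s, hs, rfl⟩; exact ⟨s, hs, rfl⟩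
  set Q₁ : Subgroup M := Subgroup.map (MulAut.conj g).toMonoidHom D with hQ₁
  have hmemQ₁ : ∀ x : M, x ∈ Q₁ ↔ ∃ d ∈ D, g * d * g⁻¹ = x := by
    intro x
    rw [hQ₁, Subgroup.mem_map]
    constructor
    · rintro ⟨d, hd, rfl⟩; exact ⟨d, hd, rfl⟩
    · rintro ⟨d, hd, rfl⟩; exact ⟨d, hd, rfl⟩
  have hDle : D ≤ N := Subgroup.map_subtype_le _
  have hQ₁N : Q₁ ≤ N := by
    intro x hx
    obtain ⟨d, hd, rfl⟩ := (hmemQ₁ x).mp hx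
    exact hN.conj_mem d (hDle hd) g
  have hnormQ₁ : ∀ s ∈ Sg, ∀ x ∈ Q₁, s * x * s⁻¹ ∈ Q₁ := by
    intro s hs x hx
    obtain ⟨k, hk, rfl⟩ := (hmemS s).mp hs
    obtain ⟨d, hd, rfl⟩ := (hmemQ₁ x).mp hx
    have hkH : k ∈ Hn := hKle hk
    have hkd : k * d * k⁻¹ ∈ D := (Subgroup.mem_normalizer_iff.mp hkH d).mp hd
    refine (hmemQ₁ _).mpr ⟨k * d * k⁻¹, hkd, ?_⟩
    group
  have hQ₁q : IsPGroup q ↥Q₁ := by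
    rw [hQ₁]
    exact (P₀.2.map N.subtype).map (MulAut.conj g).toMonoidHom
  -- a nontrivial element of the centre of Q₁
  haveI : Nontrivial ↥(P₀ : Subgroup ↥N) :=
    (Subgroup.nontrivial_iff_ne_bot _).mpr (P₀.ne_bot_of_dvd_card hqdvd)
  obtain ⟨y, hy1⟩ := exists_ne (1 : ↥(P₀ : Subgroup ↥N))
  have hyD : ((y : ↥N) : M) ∈ D := ⟨(y : ↥N), y.2, rfl⟩
  have hyne : ((y : ↥N) : M) ≠ 1 := by
    intro h
    apply hy1
    apply Subtype.ext
    apply Subtype.ext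
    exact h
  haveI : Nontrivial ↥Q₁ := by
    refine (Subgroup.nontrivial_iff_ne_bot _).mpr ?_
    intro hbot
    have : g * ((y : ↥N) : M) * g⁻¹ ∈ Q₁ := (hmemQ₁ _).mpr ⟨_, hyD, rfl⟩
    rw [hbot, Subgroup.mem_bot] at this
    apply hyne
    have h2 : ((y : ↥N) : M) = g⁻¹ * 1 * g := by
      rw [← this]; group
    rw [h2]; group
  have hcenterQ : Nontrivial (Subgroup.center ↥Q₁) := hQ₁q.center_nontrivial
  obtain ⟨c, hc1⟩ := exists_ne (1 : Subgroup.center ↥Q₁)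
  set W : Subgroup M := Q₁ ⊓ Subgroup.centralizer (Q₁ : Set M) with hWdef
  have hWN : W ≤ N := le_trans inf_le_left hQ₁N
  haveI hWcomm : IsMulCommutative W := by
    constructor
    constructor
    intro u v
    apply Subtype.ext
    have hu := (Subgroup.mem_inf.mp u.2).1
    have hv := (Subgroup.mem_inf.mp v.2).2
    exact Subgroup.mem_centralizer_iff.mp hv _ hu
  have hWinv : ∀ s ∈ Sg, ∀ x ∈ W, s * x * s⁻¹ ∈ W := by
    intro s hs x hx
    have hxQ := (Subgroup.mem_inf.mp hx).1
    have hxc := (Subgroup.mem_inf.mp hx).2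
    refine Subgroup.mem_inf.mpr ⟨hnormQ₁ s hs x hxQ, Subgroup.mem_centralizer_iff.mpr ?_⟩
    intro y hy
    have hy' : s⁻¹ * y * s ∈ Q₁ := by
      have := hnormQ₁ s⁻¹ (inv_mem hs) y hy
      simpa using this
    have hxy := Subgroup.mem_centralizer_iff.mp hxc _ hy'
    have h1 : y * (s * x * s⁻¹) = s * ((s⁻¹ * y * s) * x) * s⁻¹ := by group
    have h2 : s * (x * (s⁻¹ * y * s)) * s⁻¹ = (s * x * s⁻¹) * y := by group
    rw [h1, hxy, h2]
  set w₀ : M := ((c : ↥Q₁) : M) with hw₀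
  have hw0W : w₀ ∈ W := by
    refine Subgroup.mem_inf.mpr ⟨(c : ↥Q₁).2, Subgroup.mem_centralizer_iff.mpr ?_⟩
    intro y hy
    exact congrArg Subtype.val (Subgroup.mem_center_iff.mp c.2 ⟨y, hy⟩)
  have hw0ne : w₀ ≠ 1 := by
    intro h
    apply hc1
    apply Subtype.ext
    apply Subtype.ext
    exact h
  -- fixed-point-freeness from the centralizer hypothesis
  have hfpf : ∀ s : ↥Sg, (s : M) ∉ Z → ∀ x : ↥W, cW hWinv s x = x → x = 1 := by
    intro s hsZ x hx
    have hxM : (s : M) * x * (s : M)⁻¹ = x := congrArg Subtype.val hx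
    have hcomm : (s : M) * x = (x : M) * s := mul_inv_eq_iff_eq_mul.mp hxM
    set V : Subgroup M := Sg ⊓ Subgroup.centralizer {(x : M)} with hVdef
    have hZV : Z ≤ V := by
      intro z hz
      refine Subgroup.mem_inf.mpr ⟨hZS hz, Subgroup.mem_centralizer_iff.mpr ?_⟩
      intro h hh
      rw [Set.mem_singleton_iff] at hh
      subst hh
      exact (zcomm z hz _ (hWN x.2)).symm
    have hsV : (s : M) ∈ V := by
      refine Subgroup.mem_inf.mpr ⟨s.2, Subgroup.mem_centralizer_iff.mpr ?_⟩
      intro h hh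
      rw [Set.mem_singleton_iff] at hh
      subst hh
      exact hcomm.symm
    have hVS : V ≤ Sg := inf_le_left
    have hVne : Z ≠ V := fun h => hsZ (h ▸ hsV)
    have hcardV : ¬ (Nat.card ↥V ≤ Nat.card ↥Z) := by
      intro hle
      exact hVne (Subgroup.eq_of_le_of_card_ge hZV hle)
    have hdvdV : Nat.card ↥V ∣ p ^ 3 := by
      rw [← hcard]; exact Subgroup.card_dvd_of_le hVS
    obtain ⟨m, hm3, hmcard⟩ := (Nat.dvd_prime_pow hp).mp hdvdV
    have h2m : 2 ≤ m := by
      by_contra hcon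
      apply hcardV
      rw [hmcard, cardZ]
      calc p ^ m ≤ p ^ 1 := Nat.pow_le_pow_right hp.pos (by omega)
        _ = p := pow_one p
    have hp2V : p ^ 2 ≤ Nat.card ↥V := by
      rw [hmcard]; exact Nat.pow_le_pow_right hp.pos h2m
    have hcent := hV V hVS hp2V
    have hxV : (x : M) ∈ V := by
      apply hcent
      refine Subgroup.mem_centralizer_iff.mpr ?_
      intro y hy
      have hy2 := (Subgroup.mem_inf.mp hy).2
      exact (Subgroup.mem_centralizer_iff.mp hy2 _ (Set.mem_singleton _)).symm
    have hx1 : (x : M) = 1 := triv _ (hWN x.2) (hVS hxV)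
    exact Subtype.ext hx1
  -- apply key lemma
  have hzwW : ∀ z ∈ Z, ∀ n ∈ W, z * n = n * z := fun z hz n hn => zcomm z hz n (hWN hn)
  have hZconj : ∀ (g' : M), ∀ z ∈ Z, g' * z * g'⁻¹ ∈ Z := fun g' z hz => hZ.conj_mem z hz g'
  have hwp : (⟨w₀, hw0W⟩ : ↥W) ^ p = 1 :=
    key_pow_eq_one hWinv hzwW hZconj hxpZ hK hfpf a b hbZ hab ⟨w₀, hw0W⟩
  have hwp1 : w₀ ^ p = 1 := by
    have := congrArg (fun t : ↥W => (t : M)) hwp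
    simpa using this
  have hordp : orderOf w₀ ∣ p := orderOf_dvd_iff_pow_eq_one.mpr hwp1
  have hordN : orderOf w₀ ∣ Nat.card ↥N := Subgroup.orderOf_dvd_natCard N (hWN hw0W)
  have hord1 : orderOf w₀ ∣ 1 := by
    rw [← hcop]
    exact Nat.dvd_gcd hordN hordp
  exact hw0ne (orderOf_eq_one_iff.mp (Nat.dvd_one.mp hord1))
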